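/- arXiv:2009.12744 — 6 statements merged into one kernel-verified Lean document; each statement's English description precedes it below -/
import Mathlib

section
/- Let K be the unique positive real number satisfying K = e^{-(K+1)}. Then for every ε > 0 and every η ∈ ℝ, 0 ≤ |η| - η·tanh(η/ε) and |η| - η·tanh(η/ε) ≤ K·ε. -/
lemma key (K : ℝ) (hK : 0 < K) (hKfix : K = Real.exp (-(K + 1))) (x : ℝ) :
    0 ≤ |x| - x * Real.tanh x ∧ |x| - x * Real.tanh x ≤ K := by
  have main : ∀ y : ℝ, 0 ≤ y → 0 ≤ y - y * Real.tanh y ∧ y - y * Real.tanh y ≤ K := by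
    intro y hy
    have hpos : (0:ℝ) < Real.exp y + Real.exp (-y) := by positivity
    have htanh : Real.tanh y = (Real.exp y - Real.exp (-y)) / (Real.exp y + Real.exp (-y)) := by
      rw [Real.tanh_eq_sinh_div_cosh, Real.sinh_eq, Real.cosh_eq]
      field_simp
    have heq : y - y * Real.tanh y = 2 * y / (Real.exp (2*y) + 1) := by
      rw [htanh]
      have h2 : Real.exp (2*y) = Real.exp y * Real.exp y := by
        rw [← Real.exp_add]; ring_nf
      have he : Real.exp (-y) = (Real.exp y)⁻¹ := Real.exp_neg y
      have hne : Real.exp y ≠ 0 := (Real.exp_pos y).ne'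
      rw [h2, he]
      field_simp
      ring
    have hd : (0:ℝ) < Real.exp (2*y) + 1 := by positivity
    constructor
    · rw [heq]; positivity
    · rw [heq, div_le_iff₀ hd]
      have hle : (2*y - (K+1)) + 1 ≤ Real.exp (2*y - (K+1)) := Real.add_one_le_exp _
      have hexp : Real.exp (2*y - (K+1)) = Real.exp (2*y) * K := by
        rw [show 2*y - (K+1) = 2*y + (-(K+1)) by ring, Real.exp_add, ← hKfix]
      nlinarith
  rcases le_or_gt 0 x with hx | hx
  · rw [abs_of_nonneg hx]; exact main x hx
  · have := main (-x) (by linarith)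
    rw [abs_of_neg hx]
    rw [Real.tanh_neg] at this
    constructor <;> nlinarith [this.1, this.2]

/-- Standard hyperbolic-tangent approximation bound: for the positive fixed point `K`
of `K = exp (-(K+1))`, every `ε > 0` and `η ∈ ℝ` satisfy
`0 ≤ |η| - η tanh (η/ε) ≤ K ε`. -/
theorem stmt_2 (K : ℝ) (hK : 0 < K) (hKfix : K = Real.exp (-(K + 1))) :
    ∀ ε : ℝ, 0 < ε → ∀ η : ℝ,
      0 ≤ |η| - η * Real.tanh (η / ε) ∧ |η| - η * Real.tanh (η / ε) ≤ K * ε := by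
  intro ε hε η
  obtain ⟨h1, h2⟩ := key K hK hKfix (η / ε)
  have habs : |η| = ε * |η / ε| := by
    rw [abs_div, abs_of_pos hε]; field_simp
  have hη : η = ε * (η / ε) := by field_simp
  constructor
  · calc (0:ℝ) = ε * 0 := by ring
      _ ≤ ε * (|η/ε| - (η/ε) * Real.tanh (η/ε)) := by
          apply mul_le_mul_of_nonneg_left h1 hε.le
      _ = |η| - η * Real.tanh (η/ε) := by
          have h3 : η * Real.tanh (η/ε) = ε * (η/ε) * Real.tanh (η/ε) := by rw [← hη]
          rw [habs]; linarith
  · calc |η| - η * Real.tanh (η/ε) = ε * (|η/ε| - (η/ε) * Real.tanh (η/ε)) := by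
          have h3 : η * Real.tanh (η/ε) = ε * (η/ε) * Real.tanh (η/ε) := by rw [← hη]
          rw [habs]; linarith
      _ ≤ ε * K := mul_le_mul_of_nonneg_left h2 hε.le
      _ = K * ε := by ring
end

section
/- Let K be the unique positive real number satisfying K = e^{-(K+1)}. Then for all ϵ > 0, δ > 0, η ∈ ℝ, and c ∈ ℝ with |c| ≤ δ, it holds that η·(c - δ·tanh(K·δ·η/ϵ)) ≤ ϵ. -/
lemma key_exp (K : ℝ) (hKfix : K = Real.exp (-(K + 1))) (t : ℝ) :
    2 * t ≤ K * (Real.exp (2 * t) + 1) := by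
  have h1 : K * Real.exp (2 * t) = Real.exp (-(K + 1) + 2 * t) := by
    rw [Real.exp_add, ← hKfix]
  nlinarith [Real.add_one_le_exp (-(K + 1) + 2 * t)]

lemma tanh_eq (a : ℝ) : Real.tanh a = 1 - 2 / (Real.exp (2 * a) + 1) := by
  rw [Real.tanh_eq_sinh_div_cosh, Real.sinh_eq, Real.cosh_eq]
  have h1 : (0:ℝ) < Real.exp a + Real.exp (-a) := by positivity
  have h2 : (0:ℝ) < Real.exp (2 * a) + 1 := by positivity
  have he : Real.exp a * Real.exp (-a) = 1 := by rw [← Real.exp_add]; simp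
  have he2 : Real.exp (2 * a) = Real.exp a * Real.exp a := by
    rw [← Real.exp_add]; ring_nf
  field_simp
  have he3 : Real.exp (a * 2) = Real.exp a * Real.exp a := by rw [mul_comm]; exact he2
  nlinarith [he, he2, he3, Real.exp_pos a, Real.exp_pos (-a)]

lemma core (K : ℝ) (hK : 0 < K) (hKfix : K = Real.exp (-(K + 1)))
    (ϵ : ℝ) (hϵ : 0 < ϵ) (x : ℝ) (hx : 0 ≤ x) :
    x - x * Real.tanh (K * x / ϵ) ≤ ϵ := by
  set a := K * x / ϵ with ha
  have hE : (0:ℝ) < Real.exp (2 * a) + 1 := by positivity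
  have hk := key_exp K hKfix a
  have hax : a * ϵ = K * x := by rw [ha, div_mul_cancel₀ _ hϵ.ne']
  rw [tanh_eq]
  have h2 : 2 * x ≤ ϵ * (Real.exp (2 * a) + 1) := by nlinarith
  have : x * (2 / (Real.exp (2 * a) + 1)) ≤ ϵ := by
    rw [mul_div_assoc', div_le_iff₀ hE]; nlinarith
  nlinarith [this]

/-- Robustifying-term bound: with `K` the positive fixed point of `K = exp (-(K+1))`,
for all `ϵ, δ > 0`, `η ∈ ℝ` and `c` with `|c| ≤ δ`, one has
`η (c - δ tanh (K δ η / ϵ)) ≤ ϵ`. -/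
theorem stmt_3 (K : ℝ) (hK : 0 < K) (hKfix : K = Real.exp (-(K + 1)))
    (ϵ δ : ℝ) (hϵ : 0 < ϵ) (hδ : 0 < δ) (η c : ℝ) (hc : |c| ≤ δ) :
    η * (c - δ * Real.tanh (K * δ * η / ϵ)) ≤ ϵ := by
  have hηc : η * c ≤ |η| * δ := by
    calc η * c ≤ |η * c| := le_abs_self _
    _ = |η| * |c| := abs_mul _ _
    _ ≤ |η| * δ := by gcongr
  set x := δ * η with hx
  have harg : K * δ * η / ϵ = K * x / ϵ := by rw [hx]; ring_nf
  have hmain : |x| - x * Real.tanh (K * x / ϵ) ≤ ϵ := by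
    rcases le_or_gt 0 x with h | h
    · have := core K hK hKfix ϵ hϵ x h
      rwa [abs_of_nonneg h]
    · have := core K hK hKfix ϵ hϵ (-x) (by linarith)
      rw [abs_of_neg h]
      have harg2 : K * (-x) / ϵ = -(K * x / ϵ) := by ring
      rw [harg2, Real.tanh_neg] at this
      linarith [this]
  have hxabs : |x| = |η| * δ := by rw [hx, abs_mul, abs_of_pos hδ]; ring
  have : η * (c - δ * Real.tanh (K * δ * η / ϵ))
      = η * c - x * Real.tanh (K * x / ϵ) := by rw [harg, hx]; ring
  rw [this]
  linarith [hmain, hxabs ▸ hηc]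
end

section
/- Let q ∈ ℕ, W_max > 0, β > 0, and let S : ℝ → ℝ^q and e : ℝ → ℝ be functions. Suppose Ŵ : ℝ → ℝ^q is differentiable with Ŵ(0)ᵀŴ(0) ≤ W_max, and that for every t ≥ 0: (i) if Ŵ(t)ᵀŴ(t) < W_max, or if Ŵ(t)ᵀŴ(t) ≥ W_max and e(t)·Ŵ(t)ᵀS(t) < 0, then Ŵ'(t) = β·S(t)·e(t); and (ii) if Ŵ(t)ᵀŴ(t) ≥ W_max and e(t)·Ŵ(t)ᵀS(t) ≥ 0, then Ŵ'(t) = β·S(t)·e(t) - β·(e(t)·Ŵ(t)ᵀS(t)/(Ŵ(t)ᵀŴ(t)))·Ŵ(t). Then Ŵ(t)ᵀŴ(t) ≤ W_max for all t ≥ 0. -/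
open scoped RealInnerProductSpace

/-- The projection-based adaptive law keeps the squared norm of the neural-network
weight vector below the prescribed bound `W_max`. -/
theorem stmt_5 (q : ℕ) (Wmax β : ℝ) (hWmax : 0 < Wmax) (hβ : 0 < β)
    (S : ℝ → EuclideanSpace ℝ (Fin q)) (e : ℝ → ℝ)
    (W : ℝ → EuclideanSpace ℝ (Fin q)) (hW : Differentiable ℝ W)
    (h0 : ⟪W 0, W 0⟫ ≤ Wmax)
    (hlaw1 : ∀ t, 0 ≤ t →
      (⟪W t, W t⟫ < Wmax ∨ (Wmax ≤ ⟪W t, W t⟫ ∧ e t * ⟪W t, S t⟫ < 0)) →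
      deriv W t = (β * e t) • S t)
    (hlaw2 : ∀ t, 0 ≤ t →
      Wmax ≤ ⟪W t, W t⟫ → 0 ≤ e t * ⟪W t, S t⟫ →
      deriv W t =
        (β * e t) • S t - (β * (e t * ⟪W t, S t⟫ / ⟪W t, W t⟫)) • W t) :
    ∀ t, 0 ≤ t → ⟪W t, W t⟫ ≤ Wmax := by
  intro T hT
  set g : ℝ → ℝ := fun t => ⟪W t, W t⟫ with hg
  have hgd : ∀ x : ℝ, HasDerivAt g (2 * ⟪W x, deriv W x⟫) x := by
    intro x
    have := ((hW x).hasDerivAt.inner ℝ (hW x).hasDerivAt)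
    refine this.congr_deriv ?_
    rw [real_inner_comm (deriv W x) (W x)]
    ring
  -- show g T ≤ Wmax + ε for every ε > 0
  have key : ∀ ε : ℝ, 0 < ε → g T ≤ Wmax + ε * (T + 1) := by
    intro ε hε
    have main : ∀ ⦃x⦄, x ∈ Set.Icc 0 T → g x ≤ Wmax + ε * (x + 1) := by
      apply image_le_of_deriv_right_lt_deriv_boundary
        (f' := fun x => 2 * ⟪W x, deriv W x⟫)
        (B := fun x => Wmax + ε * (x + 1)) (B' := fun _ => ε)
      · exact fun x _ => (hgd x).continuousAt.continuousWithinAt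
      · exact fun x hx => (hgd x).hasDerivWithinAt
      · simp only [hg]; nlinarith
      · intro x
        have h1 : HasDerivAt (fun y : ℝ => y + 1) 1 x := by
          simpa using (hasDerivAt_id x).add_const 1
        have h2 := (h1.const_mul ε).const_add Wmax
        simpa using h2
      · intro x hx hgx
        have hx0 : (0 : ℝ) ≤ x := hx.1
        have hgt : Wmax < g x := by
          rw [hgx]; nlinarith
        rcases lt_or_ge (e x * ⟪W x, S x⟫) 0 with hneg | hpos
        · have hd := hlaw1 x hx0 (Or.inr ⟨hgt.le, hneg⟩)
          rw [hd, real_inner_smul_right]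
          nlinarith
        · have hd := hlaw2 x hx0 hgt.le hpos
          have hgne : g x ≠ 0 := by nlinarith
          rw [hd, inner_sub_right, real_inner_smul_right, real_inner_smul_right]
          have : ⟪W x, W x⟫ = g x := rfl
          rw [this]
          field_simp
          nlinarith
    exact main ⟨hT, le_refl T⟩
  by_contra h
  push_neg at h
  have hT1 : 0 < T + 1 := by linarith
  have hgw : 0 < g T - Wmax := by simp only [hg]; linarith
  have hεpos : 0 < (g T - Wmax) / (2 * (T + 1)) := by positivity
  have hk := key _ hεpos
  have h2 : (g T - Wmax) / (2 * (T + 1)) * (T + 1) = (g T - Wmax) / 2 := by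
    field_simp
  rw [h2] at hk
  linarith
end

section
/- Let N ≥ 2 and 1 ≤ n < N. Let f₁, …, f_N : ℝ^N → ℝ be C¹ functions such that each partial gradient ∇_i f_i is globally Lipschitz with constant l̄_i > 0, and such that the pseudo-gradient P(x) = (∇₁f₁(x), …, ∇_N f_N(x)) satisfies (x - z)ᵀ(P(x) - P(z)) ≥ m‖x - z‖² for all x, z ∈ ℝ^N and some m > 0. Let x* ∈ ℝ^N satisfy P(x*) = 0. Then for every k₂ > 0, every x̄ ∈ ℝ^N, every v̄ ∈ ℝ^{N-n}, and every y₁, …, y_N ∈ ℝ^N: ⟨x̄ - x*, -k₂·(∇₁f₁(y₁), …, ∇_N f_N(y_N)) + (0_n, v̄)⟩ ≤ -k₂·m·‖x̄ - x*‖² + ‖x̄ - x*‖·‖v̄‖ + k₂·(max_i l̄_i)·‖x̄ - x*‖·(Σ_{i=1}^N ‖y_i - x̄‖²)^{1/2}, where (0_n, v̄) ∈ ℝ^N denotes the vector whose first n components are 0 and whose last N - n components are those of v̄, and ‖·‖ is the Euclidean norm. -/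
/-- Static inequality bounding the derivative of the Lyapunov term
`V₁ = (1/2)‖x̄ - x*‖²` along the Nash equilibrium seeking dynamics: for a strongly
monotone pseudo-gradient with modulus `m` and Lipschitz partial gradients,
`⟨x̄ - x*, -k₂ (∇ᵢfᵢ(yᵢ))ᵢ + (0ₙ, v̄)⟩ ≤ -k₂ m ‖x̄ - x*‖² + ‖x̄ - x*‖ ‖v̄‖
  + k₂ (maxᵢ l̄ᵢ) ‖x̄ - x*‖ (Σᵢ ‖yᵢ - x̄‖²)^{1/2}`.
Here `w` is the vector `(0ₙ, v̄) ∈ ℝᴺ` whose first `n` components vanish. -/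
theorem stmt_8 (N n : ℕ) (hN : 2 ≤ N) (hn1 : 1 ≤ n) (hnN : n < N)
    (f : Fin N → EuclideanSpace ℝ (Fin N) → ℝ)
    (hf : ∀ i, ContDiff ℝ 1 (f i))
    (pg : Fin N → EuclideanSpace ℝ (Fin N) → ℝ)
    (hpg : ∀ i x, pg i x = fderiv ℝ (f i) x (EuclideanSpace.single i 1))
    (lbar : Fin N → ℝ) (hlbar : ∀ i, 0 < lbar i)
    (hLip : ∀ i x y, |pg i x - pg i y| ≤ lbar i * ‖x - y‖)
    (L : ℝ) (hL : IsGreatest (Set.range lbar) L)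
    (m : ℝ) (hm : 0 < m)
    (hmono : ∀ x z : EuclideanSpace ℝ (Fin N),
      m * ‖x - z‖ ^ 2 ≤ ∑ i, (x i - z i) * (pg i x - pg i z))
    (xstar : EuclideanSpace ℝ (Fin N)) (hstar : ∀ i, pg i xstar = 0) :
    ∀ k2 : ℝ, 0 < k2 →
      ∀ (xbar : EuclideanSpace ℝ (Fin N)) (w : EuclideanSpace ℝ (Fin N)),
        (∀ i : Fin N, (i : ℕ) < n → w i = 0) →
        ∀ y : Fin N → EuclideanSpace ℝ (Fin N),
          ∑ i, (xbar i - xstar i) * (-k2 * pg i (y i) + w i) ≤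
            -(k2 * m) * ‖xbar - xstar‖ ^ 2 + ‖xbar - xstar‖ * ‖w‖ +
              k2 * L * ‖xbar - xstar‖ * Real.sqrt (∑ i, ‖y i - xbar‖ ^ 2) := by
  intro k2 hk2 xbar w hw y
  set d : EuclideanSpace ℝ (Fin N) := xbar - xstar with hd
  have hdapp : ∀ i, d i = xbar i - xstar i := fun i => rfl
  have hL0 : 0 ≤ L := le_of_lt (lt_of_lt_of_le (hlbar ⟨0, by omega⟩) (hL.2 ⟨_, rfl⟩))
  -- monotonicity bound
  have hB : m * ‖d‖ ^ 2 ≤ ∑ i, d i * pg i xbar := by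
    have := hmono xbar xstar
    simpa [hstar, hdapp] using this
  -- Cauchy-Schwarz with w
  have hA : ∑ i, d i * w i ≤ ‖d‖ * ‖w‖ := by
    have h := real_inner_le_norm d w
    have h2 : (inner ℝ d w : ℝ) = ∑ i, d i * w i := by
      simp [PiLp.inner_apply, RCLike.inner_apply, mul_comm]
    linarith [h, h2.symm.le]
  have hnd : ‖d‖ = Real.sqrt (∑ i, (d i) ^ 2) := by
    rw [EuclideanSpace.norm_eq]
    congr 1
    refine Finset.sum_congr rfl fun i _ => ?_
    rw [Real.norm_eq_abs, sq_abs]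
  -- Lipschitz perturbation bound
  have hC : ∑ i, d i * (pg i xbar - pg i (y i)) ≤
      L * (‖d‖ * Real.sqrt (∑ i, ‖y i - xbar‖ ^ 2)) := by
    have step1 : ∑ i, d i * (pg i xbar - pg i (y i)) ≤
        ∑ i, |d i| * (L * ‖y i - xbar‖) := by
      refine Finset.sum_le_sum fun i _ => ?_
      have h1 : d i * (pg i xbar - pg i (y i)) ≤ |d i| * |pg i xbar - pg i (y i)| := by
        calc d i * (pg i xbar - pg i (y i)) ≤ |d i * (pg i xbar - pg i (y i))| := le_abs_self _
          _ = |d i| * |pg i xbar - pg i (y i)| := abs_mul _ _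
      have h2 : |pg i xbar - pg i (y i)| ≤ L * ‖y i - xbar‖ := by
        calc |pg i xbar - pg i (y i)| ≤ lbar i * ‖xbar - y i‖ := hLip i xbar (y i)
          _ = lbar i * ‖y i - xbar‖ := by rw [norm_sub_rev]
          _ ≤ L * ‖y i - xbar‖ := by
              exact mul_le_mul_of_nonneg_right (hL.2 ⟨i, rfl⟩) (norm_nonneg _)
      exact h1.trans (mul_le_mul_of_nonneg_left h2 (abs_nonneg _))
    have step2 : ∑ i, |d i| * ‖y i - xbar‖ ≤
        Real.sqrt (∑ i, |d i| ^ 2) * Real.sqrt (∑ i, ‖y i - xbar‖ ^ 2) := by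
      have hcs := Finset.sum_mul_sq_le_sq_mul_sq Finset.univ
        (fun i => |d i|) (fun i => ‖y i - xbar‖)
      have hnn : 0 ≤ ∑ i, |d i| * ‖y i - xbar‖ :=
        Finset.sum_nonneg fun i _ => mul_nonneg (abs_nonneg _) (norm_nonneg _)
      calc ∑ i, |d i| * ‖y i - xbar‖
          = Real.sqrt ((∑ i, |d i| * ‖y i - xbar‖) ^ 2) := (Real.sqrt_sq hnn).symm
        _ ≤ Real.sqrt ((∑ i, |d i| ^ 2) * (∑ i, ‖y i - xbar‖ ^ 2)) :=
            Real.sqrt_le_sqrt hcs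
        _ = Real.sqrt (∑ i, |d i| ^ 2) * Real.sqrt (∑ i, ‖y i - xbar‖ ^ 2) :=
            Real.sqrt_mul (Finset.sum_nonneg fun i _ => sq_nonneg _) _
    have h3 : Real.sqrt (∑ i, |d i| ^ 2) = ‖d‖ := by
      rw [hnd]; simp [sq_abs]
    calc ∑ i, d i * (pg i xbar - pg i (y i)) ≤ ∑ i, |d i| * (L * ‖y i - xbar‖) := step1
      _ = L * ∑ i, |d i| * ‖y i - xbar‖ := by
          rw [Finset.mul_sum]; exact Finset.sum_congr rfl fun i _ => by ring
      _ ≤ L * (Real.sqrt (∑ i, |d i| ^ 2) * Real.sqrt (∑ i, ‖y i - xbar‖ ^ 2)) :=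
          mul_le_mul_of_nonneg_left step2 hL0
      _ = L * (‖d‖ * Real.sqrt (∑ i, ‖y i - xbar‖ ^ 2)) := by rw [h3]
  -- decompose the sum
  have hsplit : ∑ i, (xbar i - xstar i) * (-k2 * pg i (y i) + w i) =
      k2 * (∑ i, d i * (pg i xbar - pg i (y i))) - k2 * (∑ i, d i * pg i xbar)
        + ∑ i, d i * w i := by
    rw [Finset.mul_sum, Finset.mul_sum, ← Finset.sum_sub_distrib, ← Finset.sum_add_distrib]
    refine Finset.sum_congr rfl fun i _ => ?_
    rw [hdapp]; ring
  rw [hsplit]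
  have hCk := mul_le_mul_of_nonneg_left hC (le_of_lt hk2)
  have hBk := mul_le_mul_of_nonneg_left hB (le_of_lt hk2)
  nlinarith [hA, hCk, hBk]
end

section
/- Let V : ℝ → ℝ be differentiable with V(t) ≥ 0 for all t ≥ 0, and let a > 0 and c ≥ 0. Suppose that for every t ≥ 0, V(t) ≥ c implies V'(t) ≤ -a·V(t). Then V(t) ≤ max(V(0), c) for all t ≥ 0. -/
/-- Ultimate-boundedness principle: a nonnegative differentiable function which decays
at rate `-a V` whenever it exceeds the threshold `c` never exceeds `max (V 0) c`. -/
theorem stmt_9 (V : ℝ → ℝ) (hV : Differentiable ℝ V)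
    (hpos : ∀ t, 0 ≤ t → 0 ≤ V t) (a c : ℝ) (ha : 0 < a) (hc : 0 ≤ c)
    (hd : ∀ t, 0 ≤ t → c ≤ V t → deriv V t ≤ -a * V t) :
    ∀ t, 0 ≤ t → V t ≤ max (V 0) c := by
  intro t ht
  by_contra hcon
  push_neg at hcon
  set M := max (V 0) c with hM
  have hV0 : V 0 ≤ M := le_max_left _ _
  have hcM : c ≤ M := le_max_right _ _
  set S : Set ℝ := {u | u ∈ Set.Icc 0 t ∧ V u ≤ M} with hS
  have hSne : S.Nonempty := ⟨0, ⟨le_refl 0, ht⟩, hV0⟩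
  have hSbdd : BddAbove S := ⟨t, fun u hu => hu.1.2⟩
  have hSclosed : IsClosed S := by
    have : S = Set.Icc 0 t ∩ V ⁻¹' Set.Iic M := by
      ext u; simp [hS, Set.mem_Icc, and_assoc]
    rw [this]
    exact isClosed_Icc.inter (isClosed_Iic.preimage hV.continuous)
  set s := sSup S with hs
  have hsmem : s ∈ S := hSclosed.csSup_mem hSne hSbdd
  obtain ⟨⟨hs0, hst⟩, hVs⟩ := hsmem
  have hslt : s < t := lt_of_le_of_ne hst (fun h => absurd hVs (by rw [h]; exact not_le.mpr hcon))
  have hgt : ∀ u, s < u → u ≤ t → M < V u := by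
    intro u hsu hut
    by_contra h
    push_neg at h
    have : u ∈ S := ⟨⟨le_trans hs0 hsu.le, hut⟩, h⟩
    exact absurd (le_csSup hSbdd this) (not_le.mpr hsu)
  have hanti : AntitoneOn V (Set.Icc s t) := by
    apply antitoneOn_of_deriv_nonpos (convex_Icc s t) hV.continuous.continuousOn
      (fun u _ => (hV u).differentiableWithinAt)
    intro u hu
    rw [interior_Icc] at hu
    have hu0 : (0:ℝ) ≤ u := le_trans hs0 hu.1.le
    have hMu : M < V u := hgt u hu.1 hu.2.le
    have := hd u hu0 (le_trans hcM hMu.le)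
    nlinarith [hpos u hu0]
  have := hanti ⟨le_refl s, hslt.le⟩ ⟨hst, le_refl t⟩ hslt.le
  exact absurd (this.trans hVs) (not_le.mpr hcon)
end

section
/- Let N ≥ 2 and let G be a connected simple (undirected) graph on the vertex set {1, …, N}, with adjacency matrix A = [a_{ij}] (a_{ij} = 1 if {i,j} is an edge and a_{ij} = 0 otherwise, a_{ii} = 0) and Laplacian matrix L = D - A, where D is the diagonal matrix with D_{ii} = Σ_j a_{ij}. Let A₀ be the N²×N² diagonal matrix whose diagonal entries are a_{11}, a_{12}, …, a_{1N}, a_{21}, …, a_{NN} in this order, and let I_N be the N×N identity matrix. Then the matrix L ⊗ I_N + A₀ (where ⊗ is the Kronecker product) is symmetric positive definite. -/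
open Kronecker Matrix

lemma kron_id_quadform {N : ℕ} (L : Matrix (Fin N) (Fin N) ℝ) (x : Fin N × Fin N → ℝ) :
    x ⬝ᵥ ((L ⊗ₖ (1 : Matrix (Fin N) (Fin N) ℝ)) *ᵥ x) =
    ∑ j, (fun i => x (i, j)) ⬝ᵥ (L *ᵥ fun i => x (i, j)) := by
  simp only [dotProduct, Matrix.mulVec, Fintype.sum_prod_type,
    Matrix.kroneckerMap_apply, Matrix.one_apply, mul_ite, mul_one, mul_zero,
    ite_mul, zero_mul, Finset.sum_ite_eq, Finset.sum_ite_eq', Finset.mem_univ, if_true]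
  rw [Finset.sum_comm]


/-- For a connected simple graph `G` on `N ≥ 2` vertices with Laplacian `L` and
adjacency matrix `A`, the matrix `L ⊗ I_N + A₀` is symmetric positive definite, where
`A₀` is the `N²×N²` diagonal matrix with diagonal entries `a_{ij}` stacked row by row. -/
theorem stmt_10 (N : ℕ) (hN : 2 ≤ N) (G : SimpleGraph (Fin N))
    [DecidableRel G.Adj] (hG : G.Connected) :
    (G.lapMatrix ℝ ⊗ₖ (1 : Matrix (Fin N) (Fin N) ℝ) +
      Matrix.diagonal (fun p : Fin N × Fin N => G.adjMatrix ℝ p.1 p.2)).PosDef := by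
  have hLpsd := SimpleGraph.posSemidef_lapMatrix ℝ G
  rw [Matrix.posDef_iff_dotProduct_mulVec]
  constructor
  · -- Hermitian
    apply Matrix.IsHermitian.add
    · ext ⟨i, j⟩ ⟨i', j'⟩
      simp only [Matrix.conjTranspose_apply, Matrix.kroneckerMap_apply, star_trivial]
      rw [(G.isSymm_lapMatrix (R := ℝ)).apply i i', Matrix.one_apply, Matrix.one_apply]
      simp [eq_comm]
    · exact Matrix.isHermitian_diagonal _
  · intro x hx
    simp only [star_trivial, Matrix.add_mulVec, dotProduct_add]
    -- the two quadratic forms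
    set q1 := x ⬝ᵥ ((G.lapMatrix ℝ ⊗ₖ (1 : Matrix (Fin N) (Fin N) ℝ)) *ᵥ x) with hq1
    set q2 := x ⬝ᵥ (Matrix.diagonal (fun p : Fin N × Fin N => G.adjMatrix ℝ p.1 p.2) *ᵥ x)
      with hq2
    have hterm : ∀ j : Fin N, 0 ≤ (fun i => x (i, j)) ⬝ᵥ (G.lapMatrix ℝ *ᵥ fun i => x (i, j)) :=
      fun j => by simpa using hLpsd.dotProduct_mulVec_nonneg (fun i => x (i, j))
    have hq1' : q1 = ∑ j, (fun i => x (i, j)) ⬝ᵥ (G.lapMatrix ℝ *ᵥ fun i => x (i, j)) :=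
      kron_id_quadform _ _
    have h1 : 0 ≤ q1 := hq1' ▸ Finset.sum_nonneg fun j _ => hterm j
    have hq2' : q2 = ∑ p : Fin N × Fin N, G.adjMatrix ℝ p.1 p.2 * (x p * x p) := by
      simp [hq2, Matrix.mulVec_diagonal, dotProduct, mul_comm, mul_left_comm]
    have h2term : ∀ p : Fin N × Fin N, 0 ≤ G.adjMatrix ℝ p.1 p.2 * (x p * x p) :=
      fun p => mul_nonneg (by by_cases h : G.Adj p.1 p.2 <;> simp [h]) (mul_self_nonneg _)
    have h2 : 0 ≤ q2 := hq2' ▸ Finset.sum_nonneg fun p _ => h2term p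
    rcases lt_or_eq_of_le (add_nonneg h1 h2) with h | h
    · exact h
    exfalso
    have hq1z : q1 = 0 := le_antisymm (by linarith) h1
    have hq2z : q2 = 0 := le_antisymm (by linarith) h2
    -- each Laplacian term vanishes
    have hterm0 : ∀ j : Fin N,
        (fun i => x (i, j)) ⬝ᵥ (G.lapMatrix ℝ *ᵥ fun i => x (i, j)) = 0 := by
      intro j
      have := (Finset.sum_eq_zero_iff_of_nonneg (fun j _ => hterm j)).mp (hq1' ▸ hq1z)
      exact this j (Finset.mem_univ j)
    have hreach : ∀ j i i' : Fin N, x (i, j) = x (i', j) := by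
      intro j i i'
      have := (G.lapMatrix_toLinearMap₂'_apply'_eq_zero_iff_forall_reachable
        (fun i => x (i, j))).mp (by rw [Matrix.toLinearMap₂'_apply']; exact hterm0 j)
      exact this i i' (hG i i')
    have hadj0 : ∀ i j : Fin N, G.Adj i j → x (i, j) = 0 := by
      intro i j hadj
      have := (Finset.sum_eq_zero_iff_of_nonneg (fun p _ => h2term p)).mp (hq2' ▸ hq2z)
      have h := this (i, j) (Finset.mem_univ _)
      simp only [SimpleGraph.adjMatrix_apply, hadj, if_true, one_mul] at h
      exact mul_self_eq_zero.mp h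
    -- every vertex has a neighbor
    have hnbr : ∀ j : Fin N, ∃ i, G.Adj i j := by
      intro j
      haveI : Nontrivial (Fin N) := Fin.nontrivial_iff_two_le.mpr hN
      obtain ⟨i₀, hi₀⟩ := exists_ne j
      obtain ⟨w⟩ := hG j i₀
      cases w with
      | nil => exact absurd rfl hi₀.symm
      | cons h _ => exact ⟨_, h.symm⟩
    apply hx
    funext ⟨i, j⟩
    obtain ⟨i₀, hi₀⟩ := hnbr j
    rw [show x (i, j) = x (i₀, j) from hreach j i i₀, hadj0 i₀ j hi₀]
    rfl
end
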